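/- Let n ≥ 1, σ ∈ S_{2n}, and let w be the element of minimal length in the double coset O_σ. Then there exists an admissible sequence [k_n, k_{n−1}, …, k_1] of nonnegative integers such that w = c_{k_n,n} c_{k_{n−1},n−1} ⋯ c_{k_1,1} and ℓ(w) = k_n + k_{n−1} + ⋯ + k_1 (so this product is a minimal decomposition of w). -/

import Mathlib

/-- The subgroup `S ⊆ S_{2n}` of permutations fixing each of the last `n` points
(`n+1, …, 2n` in one-based terms, i.e. the indices `i` with `n ≤ i` in zero-based terms). -/
def Sfix (n : ℕ) : Set (Equiv.Perm (Fin (2 * n))) :=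
  {g | ∀ i : Fin (2 * n), n ≤ (i : ℕ) → g i = i}

/-- The double coset `O_σ = {g σ h : g, h ∈ S}`. -/
def dcoset (n : ℕ) (σ : Equiv.Perm (Fin (2 * n))) : Set (Equiv.Perm (Fin (2 * n))) :=
  {t | ∃ g ∈ Sfix n, ∃ h ∈ Sfix n, t = g * σ * h}

/-- The length of a permutation: its number of inversions. -/
noncomputable def len (n : ℕ) (σ : Equiv.Perm (Fin (2 * n))) : ℕ :=
  {p : Fin (2 * n) × Fin (2 * n) | p.1 < p.2 ∧ σ p.2 < σ p.1}.ncard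

/-- The adjacent transposition `s_i = (i, i+1)` of `{1, …, m}` (one-based), i.e. the swap
of the zero-based positions `i-1` and `i`; it is the identity for out-of-range `i`. -/
def sTrans (m i : ℕ) : Equiv.Perm (Fin m) :=
  if h : 1 ≤ i ∧ i < m then
    Equiv.swap ⟨i - 1, by omega⟩ ⟨i, h.2⟩
  else 1

/-- The cycle `c_{k,j} = s_{j+n-k} s_{j+n-k+1} ⋯ s_{j+n-1} ∈ S_{2n}` (with `c_{0,j} = e`). -/
def cyc (n k j : ℕ) : Equiv.Perm (Fin (2 * n)) :=
  ((List.range k).map fun t => sTrans (2 * n) (j + n - k + t)).prod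

/-- The product `c_{k_n,n} c_{k_{n-1},n-1} ⋯ c_{k_1,1} ∈ S_{2n}` associated to a sequence
`[k_n, …, k_1]` (encoded as a function `k : ℕ → ℕ` on the indices `1, …, n`). -/
def cycProd (n : ℕ) (k : ℕ → ℕ) : Equiv.Perm (Fin (2 * n)) :=
  ((List.range n).map fun t => cyc n (k (n - t)) (n - t)).prod

/-- The bound `max (max_{j < i ≤ n} (k_i + j + 1 - i)) j` appearing in admissibility. -/
def admBound (n : ℕ) (k : ℕ → ℕ) (j : ℕ) : ℕ :=
  max ((Finset.Ioc j n).sup fun i => k i + j + 1 - i) j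

/-- A sequence `[k_n, …, k_1]` of nonnegative integers is admissible if
`k_j ≤ max (max_{j < i ≤ n} (k_i + j + 1 - i)) j` for every `1 ≤ j ≤ n`. -/
def Admissible (n : ℕ) (k : ℕ → ℕ) : Prop :=
  ∀ j, 1 ≤ j → j ≤ n → k j ≤ admBound n k j





theorem Equiv.Perm.apply_inv_self {α : Type*} (f : Equiv.Perm α) (x : α) : f (f⁻¹ x) = x :=
  f.apply_symm_apply x

theorem Equiv.Perm.inv_apply_self {α : Type*} (f : Equiv.Perm α) (x : α) : f⁻¹ (f x) = x :=
  f.symm_apply_apply x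

lemma len_mul_swap_lt {n : ℕ} (w : Equiv.Perm (Fin (2*n))) (a b : Fin (2*n))
    (hab : (a:ℕ)+1 = (b:ℕ)) (h : w b < w a) :
    len n (w * Equiv.swap a b) < len n w := by
  classical
  set s := Equiv.swap a b with hs
  have hsa : s a = b := Equiv.swap_apply_left a b
  have hsb : s b = a := Equiv.swap_apply_right a b
  have hso : ∀ x : Fin (2*n), x ≠ a → x ≠ b → s x = x := fun x h1 h2 =>
    Equiv.swap_apply_of_ne_of_ne h1 h2
  have hablt : a < b := by rw [Fin.lt_def]; omega
  have habInv : (a, b) ∈ {p : Fin (2*n) × Fin (2*n) | p.1 < p.2 ∧ w p.2 < w p.1} := ⟨hablt, h⟩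
  have key : (fun pq : Fin (2*n) × Fin (2*n) => (s pq.1, s pq.2)) ''
      {p : Fin (2*n) × Fin (2*n) | p.1 < p.2 ∧ (w * s) p.2 < (w * s) p.1}
      ⊆ {p : Fin (2*n) × Fin (2*n) | p.1 < p.2 ∧ w p.2 < w p.1} \ {(a, b)} := by
    rintro ⟨x, y⟩ ⟨⟨p, q⟩, ⟨hpq, hinv⟩, heq⟩
    simp only [Prod.mk.injEq] at heq
    obtain ⟨hx, hy⟩ := heq
    have hpq : p < q := hpq
    have hinv' : w (s q) < w (s p) := hinv
    have hpqne : ¬(p = a ∧ q = b) := by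
      rintro ⟨rfl, rfl⟩
      rw [hsa, hsb] at hinv'
      exact absurd hinv' (not_lt.2 (le_of_lt h))
    have hlt : s p < s q := by
      rcases eq_or_ne p a with rfl | hpa
      · have hqb : q ≠ b := fun hq => hpqne ⟨rfl, hq⟩
        have hqa : q ≠ p := ne_of_gt hpq
        rw [hsa, hso q hqa hqb, Fin.lt_def]
        have h1 : (q:ℕ) ≠ (b:ℕ) := fun hc => hqb (Fin.ext hc)
        have h2 : (p:ℕ) < (q:ℕ) := hpq
        omega
      · rcases eq_or_ne p b with rfl | hpb
        · have hqa : q ≠ a := by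
            rintro rfl
            rw [Fin.lt_def] at hpq hablt; omega
          have hqb : q ≠ p := ne_of_gt hpq
          rw [hsb, hso q hqa hqb, Fin.lt_def]
          rw [Fin.lt_def] at hpq hablt; omega
        · have hpa' : (p:ℕ) ≠ (a:ℕ) := fun hc => hpa (Fin.ext hc)
          have hpb' : (p:ℕ) ≠ (b:ℕ) := fun hc => hpb (Fin.ext hc)
          rw [hso p hpa hpb]
          rcases eq_or_ne q a with rfl | hqa
          · rw [hsa, Fin.lt_def]
            rw [Fin.lt_def] at hpq; omega
          · rcases eq_or_ne q b with rfl | hqb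
            · rw [hsb, Fin.lt_def]
              rw [Fin.lt_def] at hpq; omega
            · rw [hso q hqa hqb]; exact hpq
    refine ⟨⟨by rw [← hx, ← hy]; exact hlt, by rw [← hx, ← hy]; exact hinv'⟩, ?_⟩
    simp only [Set.mem_singleton_iff, Prod.mk.injEq, not_and]
    intro hxa hyb
    rw [← hx] at hxa; rw [← hy] at hyb
    have : p = b := s.injective (by rw [hxa, hsb])
    have : q = a := s.injective (by rw [hyb, hsa])
    subst this; subst ‹p = b›
    rw [Fin.lt_def] at hpq; omega
  have hinj : Function.Injective (fun pq : Fin (2*n) × Fin (2*n) => (s pq.1, s pq.2)) := by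
    intro x y hxy
    simp only [Prod.mk.injEq] at hxy
    exact Prod.ext (s.injective hxy.1) (s.injective hxy.2)
  calc len n (w * s)
      = ((fun pq : Fin (2*n) × Fin (2*n) => (s pq.1, s pq.2)) ''
        {p : Fin (2*n) × Fin (2*n) | p.1 < p.2 ∧ (w * s) p.2 < (w * s) p.1}).ncard := by
        rw [Set.ncard_image_of_injective _ hinj]; rfl
    _ ≤ ({p : Fin (2*n) × Fin (2*n) | p.1 < p.2 ∧ w p.2 < w p.1} \ {(a, b)}).ncard :=
        Set.ncard_le_ncard key (Set.toFinite _)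
    _ < len n w := Set.ncard_diff_singleton_lt_of_mem habInv (Set.toFinite _)

lemma len_inv {n : ℕ} (w : Equiv.Perm (Fin (2*n))) : len n w⁻¹ = len n w := by
  have himg : {p : Fin (2*n) × Fin (2*n) | p.1 < p.2 ∧ w⁻¹ p.2 < w⁻¹ p.1}
      = (fun pq : Fin (2*n) × Fin (2*n) => (w pq.2, w pq.1)) ''
        {p : Fin (2*n) × Fin (2*n) | p.1 < p.2 ∧ w p.2 < w p.1} := by
    ext ⟨x, y⟩
    constructor
    · rintro ⟨hxy, hw⟩
      exact ⟨(w⁻¹ y, w⁻¹ x), ⟨hw, by simpa using hxy⟩, by simp⟩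
    · rintro ⟨⟨p, q⟩, ⟨hpq, hw⟩, heq⟩
      simp only [Prod.mk.injEq] at heq
      obtain ⟨rfl, rfl⟩ := heq
      exact ⟨hw, by simpa using hpq⟩
  have hinj : Function.Injective (fun pq : Fin (2*n) × Fin (2*n) => (w pq.2, w pq.1)) := by
    intro x y hxy
    simp only [Prod.mk.injEq] at hxy
    exact Prod.ext (w.injective hxy.2) (w.injective hxy.1)
  rw [len, himg, Set.ncard_image_of_injective _ hinj]; rfl

lemma Sfix_mul {n : ℕ} {g h : Equiv.Perm (Fin (2*n))} (hg : g ∈ Sfix n) (hh : h ∈ Sfix n) :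
    g * h ∈ Sfix n := fun i hi => by
  simp only [Equiv.Perm.mul_apply]; rw [hh i hi, hg i hi]

lemma swap_mem_Sfix {n : ℕ} (a b : Fin (2*n)) (ha : (a:ℕ) < n) (hb : (b:ℕ) < n) :
    Equiv.swap a b ∈ Sfix n := fun i hi =>
  Equiv.swap_apply_of_ne_of_ne (fun e => by rw [e] at hi; omega) (fun e => by rw [e] at hi; omega)

lemma dcoset_mul_right {n : ℕ} {σ w s : Equiv.Perm (Fin (2*n))} (hw : w ∈ dcoset n σ)
    (hs : s ∈ Sfix n) : w * s ∈ dcoset n σ := by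
  obtain ⟨g, hg, h, hh, rfl⟩ := hw
  exact ⟨g, hg, h * s, Sfix_mul hh hs, by rw [mul_assoc]⟩

lemma dcoset_mul_left {n : ℕ} {σ w s : Equiv.Perm (Fin (2*n))} (hw : w ∈ dcoset n σ)
    (hs : s ∈ Sfix n) : s * w ∈ dcoset n σ := by
  obtain ⟨g, hg, h, hh, rfl⟩ := hw
  exact ⟨s * g, Sfix_mul hs hg, h, hh, by group⟩

lemma mono_of_adj {n : ℕ} (f : Fin (2*n) → Fin (2*n))
    (hadj : ∀ a b : Fin (2*n), (a:ℕ)+1 = (b:ℕ) → (b:ℕ) < n → f a < f b) :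
    ∀ p q : Fin (2*n), (p:ℕ) < (q:ℕ) → (q:ℕ) < n → f p < f q := by
  have H : ∀ d (p q : Fin (2*n)), (q:ℕ) = (p:ℕ) + d + 1 → (q:ℕ) < n → f p < f q := by
    intro d
    induction d with
    | zero => exact fun p q h1 h2 => hadj p q (by omega) h2
    | succ d ih =>
      intro p q h1 h2
      have hq1 : (q:ℕ) - 1 < 2*n := by omega
      exact (ih p ⟨(q:ℕ)-1, hq1⟩ (by simp; omega) (by simp; omega)).trans
        (hadj ⟨(q:ℕ)-1, hq1⟩ q (by simp; omega) h2)
  exact fun p q hpq hq => H ((q:ℕ)-(p:ℕ)-1) p q (by omega) hq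

lemma min_A {n : ℕ} {σ w : Equiv.Perm (Fin (2*n))} (hw : w ∈ dcoset n σ)
    (hmin : ∀ t ∈ dcoset n σ, len n w ≤ len n t) :
    ∀ p q : Fin (2*n), (p:ℕ) < (q:ℕ) → (q:ℕ) < n → w p < w q := by
  apply mono_of_adj
  intro a b hab hb
  by_contra hc
  have hne : w b ≠ w a := fun e => by
    have : b = a := w.injective e
    rw [this] at hab; omega
  have hlt : w b < w a := lt_of_le_of_ne (not_lt.1 hc) hne
  have hs : Equiv.swap a b ∈ Sfix n := swap_mem_Sfix a b (by omega) hb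
  exact absurd (hmin _ (dcoset_mul_right hw hs)) (not_le.2 (len_mul_swap_lt w a b hab hlt))

lemma min_B {n : ℕ} {σ w : Equiv.Perm (Fin (2*n))} (hw : w ∈ dcoset n σ)
    (hmin : ∀ t ∈ dcoset n σ, len n w ≤ len n t) :
    ∀ p q : Fin (2*n), (p:ℕ) < (q:ℕ) → (q:ℕ) < n → w⁻¹ p < w⁻¹ q := by
  apply mono_of_adj
  intro a b hab hb
  by_contra hc
  have hne : w⁻¹ b ≠ w⁻¹ a := fun e => by
    have : b = a := w⁻¹.injective e
    rw [this] at hab; omega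
  have hlt : w⁻¹ b < w⁻¹ a := lt_of_le_of_ne (not_lt.1 hc) hne
  have hs : Equiv.swap a b ∈ Sfix n := swap_mem_Sfix a b (by omega) hb
  have hkey : len n (Equiv.swap a b * w) < len n w := by
    have h1 : len n (w⁻¹ * Equiv.swap a b) < len n w⁻¹ := len_mul_swap_lt w⁻¹ a b hab hlt
    have h2 : (Equiv.swap a b * w)⁻¹ = w⁻¹ * Equiv.swap a b := by
      rw [mul_inv_rev, Equiv.swap_inv]
    calc len n (Equiv.swap a b * w) = len n (Equiv.swap a b * w)⁻¹ := (len_inv _).symm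
      _ = len n (w⁻¹ * Equiv.swap a b) := by rw [h2]
      _ < len n w⁻¹ := h1
      _ = len n w := len_inv w
  exact absurd (hmin _ (dcoset_mul_left hw hs)) (not_le.2 hkey)


def sProd (m a L : ℕ) : Equiv.Perm (Fin m) :=
  ((List.range L).map fun t => sTrans m (a + t)).prod

lemma sProd_succ (m a L : ℕ) : sProd m a (L+1) = sProd m a L * sTrans m (a+L) := by
  simp only [sProd, List.range_succ, List.map_append, List.prod_append, List.map_cons,
    List.map_nil, List.prod_cons, List.prod_nil, mul_one]

lemma sProd_apply_val (m a : ℕ) (ha : 1 ≤ a) : ∀ L, a + L ≤ m → ∀ x : Fin m,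
    ((sProd m a L x : Fin m) : ℕ) = if (x:ℕ) = a + L - 1 then a-1
      else if a - 1 ≤ (x:ℕ) ∧ (x:ℕ) < a + L - 1 then (x:ℕ)+1 else (x:ℕ) := by
  intro L
  induction L with
  | zero =>
    intro hL x
    simp only [sProd, List.range_zero, List.map_nil, List.prod_nil, Equiv.Perm.one_apply]
    split_ifs with h1 h2
    · omega
    · omega
    · rfl
  | succ L ih =>
    intro hL x
    have hL' : a + L ≤ m := by omega
    have hcond : 1 ≤ a + L ∧ a + L < m := ⟨by omega, by omega⟩
    have hp1 : a+L-1 < m := by omega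
    have hp2 : a+L < m := by omega
    have hsT : sTrans m (a+L) = Equiv.swap (⟨a+L-1, hp1⟩ : Fin m) ⟨a+L, hp2⟩ := by
      simp only [sTrans, dif_pos hcond]
    have hswap : ((Equiv.swap (⟨a+L-1, hp1⟩ : Fin m) ⟨a+L, hp2⟩ x : Fin m) : ℕ)
        = if (x:ℕ) = a+L-1 then a+L else if (x:ℕ) = a+L then a+L-1 else (x:ℕ) := by
      rw [Equiv.swap_apply_def, apply_ite (Fin.val), apply_ite (Fin.val)]
      by_cases h1 : (x:ℕ) = a+L-1
      · rw [if_pos (Fin.ext h1 : x = ⟨a+L-1, hp1⟩), if_pos h1]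
      · rw [if_neg (fun e => h1 (by rw [e]) : ¬ x = ⟨a+L-1, hp1⟩), if_neg h1]
        by_cases h2 : (x:ℕ) = a+L
        · rw [if_pos (Fin.ext h2 : x = ⟨a+L, hp2⟩), if_pos h2]
        · rw [if_neg (fun e => h2 (by rw [e]) : ¬ x = ⟨a+L, hp2⟩), if_neg h2]
    rw [sProd_succ, Equiv.Perm.mul_apply, hsT, ih hL', hswap]
    split_ifs <;> omega

lemma cyc_apply_val {n : ℕ} (k j : ℕ) (hj : 1 ≤ j) (hjn : j ≤ n) (hk : k ≤ n+j-1)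
    (x : Fin (2*n)) :
    ((cyc n k j x : Fin (2*n)) : ℕ) = if (x:ℕ) = n+j-1 then n+j-1-k
      else if n+j-1-k ≤ (x:ℕ) ∧ (x:ℕ) < n+j-1 then (x:ℕ)+1 else (x:ℕ) := by
  have h := sProd_apply_val (2*n) (j+n-k) (by omega) k (by omega) x
  have hc : cyc n k j = sProd (2*n) (j+n-k) k := rfl
  rw [hc, h]
  split_ifs <;> omega

lemma card_filter_val_eq {N : ℕ} (P : ℕ → Prop) [DecidablePred P] (s : Finset ℕ)
    (hmem : ∀ y, y ∈ s ↔ (P y ∧ y < N)) :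
    (Finset.univ.filter fun x : Fin N => P (x:ℕ)).card = s.card := by
  apply Finset.card_nbij (fun x : Fin N => (x:ℕ))
  · intro a ha
    simp only [Finset.mem_coe, Finset.mem_filter, Finset.mem_univ, true_and] at ha
    exact (hmem a).2 ⟨ha, a.isLt⟩
  · intro x _ y _ h
    exact Fin.ext h
  · intro y hy
    obtain ⟨h1, h2⟩ := (hmem y).1 (Finset.mem_coe.1 hy)
    exact ⟨⟨y, h2⟩, Finset.mem_coe.2 (Finset.mem_filter.2 ⟨Finset.mem_univ _, h1⟩), rfl⟩

def Kf (n : ℕ) (v : Equiv.Perm (Fin (2*n))) (m : ℕ) : ℕ :=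
  if h : n + m - 1 < 2*n then
    (Finset.univ.filter fun i : Fin (2*n) => (i:ℕ) < n+m-1 ∧ v ⟨n+m-1, h⟩ < v i).card
  else 0

lemma Kf_eq {n : ℕ} (v : Equiv.Perm (Fin (2*n))) (m : ℕ) (h : n + m - 1 < 2*n)
    (Q : Fin (2*n)) (hQ : (Q:ℕ) = n + m - 1) :
    Kf n v m = (Finset.univ.filter fun i : Fin (2*n) => (i:ℕ) < n+m-1 ∧ v Q < v i).card := by
  rw [Kf, dif_pos h]
  have : (⟨n+m-1, h⟩ : Fin (2*n)) = Q := Fin.ext (by simp [hQ])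
  rw [this]

lemma peel {n : ℕ} (hn : 1 ≤ n) :
    ∀ j, j ≤ n → ∀ v : Equiv.Perm (Fin (2*n)),
    (∀ p q : Fin (2*n), (p:ℕ) < (q:ℕ) → (q:ℕ) < n → v p < v q) →
    (∀ i : Fin (2*n), n + j ≤ (i:ℕ) → v i = i) →
    ∀ k : ℕ → ℕ, (∀ m, 1 ≤ m → m ≤ j → k m = Kf n v m) →
    v = ((List.range j).map fun t => cyc n (k (j - t)) (j - t)).prod := by
  intro j
  induction j with
  | zero =>
    intro _ v hA hC k _
    simp only [List.range_zero, List.map_nil, List.prod_nil]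
    have hsmall : ∀ x : Fin (2*n), (x:ℕ) < n → (v x : ℕ) < n := by
      intro x hx
      by_contra hge
      have h1 : v (v x) = v x := hC (v x) (by omega)
      have h2 : v x = x := v.injective h1
      have := congrArg Fin.val h2
      omega
    have hge : ∀ c : ℕ, ∀ x : Fin (2*n), (x:ℕ) = c → c < n → c ≤ (v x : ℕ) := by
      intro c
      induction c with
      | zero => exact fun x _ _ => Nat.zero_le _
      | succ c ih =>
        intro x hx hcn
        have hx1 : c < 2*n := by omega
        have h1 : c ≤ (v ⟨c, hx1⟩ : ℕ) := ih ⟨c, hx1⟩ rfl (by omega)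
        have h2 : v ⟨c, hx1⟩ < v x := hA _ _ (by simp [hx]) (by omega)
        rw [Fin.lt_def] at h2; omega
    have hle : ∀ d : ℕ, ∀ x : Fin (2*n), (x:ℕ) + d + 1 = n → (v x : ℕ) ≤ (x:ℕ) := by
      intro d
      induction d with
      | zero =>
        intro x hx
        have := hsmall x (by omega); omega
      | succ d ih =>
        intro x hx
        have hx1 : (x:ℕ) + 1 < 2*n := by omega
        have hval : ((⟨(x:ℕ)+1, hx1⟩ : Fin (2*n)) : ℕ) = (x:ℕ)+1 := rfl
        have h1 : (v ⟨(x:ℕ)+1, hx1⟩ : ℕ) ≤ ((⟨(x:ℕ)+1, hx1⟩ : Fin (2*n)) : ℕ) :=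
          ih _ (by rw [hval]; omega)
        have h2 : v x < v ⟨(x:ℕ)+1, hx1⟩ := hA _ _ (by rw [hval]; omega) (by rw [hval]; omega)
        rw [Fin.lt_def] at h2; omega
    refine Equiv.ext fun x => ?_
    show v x = x
    rcases lt_or_ge (x:ℕ) n with hx | hx
    · have h1 := hge (x:ℕ) x rfl hx
      have h2 := hle (n - (x:ℕ) - 1) x (by omega)
      exact Fin.ext (by omega)
    · exact hC x (by omega)
  | succ j ih =>
    intro hj1 v hA hC k hk
    have hjn : j ≤ n := by omega
    have hP : n + j < 2*n := by omega
    set PF : Fin (2*n) := ⟨n+j, hP⟩ with hPF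
    have hPFval : (PF:ℕ) = n+j := rfl
    have hvPle : (v PF : ℕ) ≤ n + j := by
      by_contra hgt
      have h1 : v (v PF) = v PF := hC (v PF) (by omega)
      have h2 : v PF = PF := v.injective h1
      have := congrArg Fin.val h2
      rw [hPFval] at this; omega
    set κ : ℕ := n + j - (v PF : ℕ) with hκ
    -- Kf n v (j+1) = κ
    have hfixval : ∀ y : Fin (2*n), n+j+1 ≤ (y:ℕ) → v y = y := fun y hy => hC y (by omega)
    have hKf : Kf n v (j+1) = κ := by
      rw [Kf_eq v (j+1) (by omega) PF (by omega)]
      rw [show n+(j+1)-1 = n+j from by omega]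
      have hVcard : (Finset.univ.filter fun y : Fin (2*n) =>
          (v PF:ℕ) < (y:ℕ) ∧ (y:ℕ) ≤ n+j).card = κ := by
        rw [card_filter_val_eq (fun y => (v PF:ℕ) < y ∧ y ≤ n+j) (Finset.Ioc (v PF:ℕ) (n+j))
          (fun y => by simp only [Finset.mem_Ioc]; omega), Nat.card_Ioc]
      rw [← hVcard]
      apply Finset.card_nbij (fun i => v i)
      · intro i hi
        simp only [Finset.mem_coe, Finset.mem_filter, Finset.mem_univ, true_and] at hi ⊢
        obtain ⟨hi1, hi2⟩ := hi
        refine ⟨Fin.lt_def.1 hi2, ?_⟩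
        by_contra hgt
        have h1 : v (v i) = v i := hfixval (v i) (by omega)
        have h2 : v i = i := v.injective h1
        have := congrArg Fin.val h2
        omega
      · intro x _ y _ h
        exact v.injective h
      · intro y hy
        simp only [Finset.coe_filter, Finset.mem_univ, true_and, Set.mem_setOf_eq] at hy ⊢
        obtain ⟨hy1, hy2⟩ := hy
        refine ⟨v⁻¹ y, ⟨?_, ?_⟩, ?_⟩
        · -- ↑(v⁻¹ y) < n+j
          by_contra hge
          push_neg at hge
          rcases eq_or_lt_of_le hge with heq | hlt
          · have : v⁻¹ y = PF := Fin.ext (by omega)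
            have : y = v PF := by rw [← this, Equiv.Perm.apply_inv_self]
            rw [this] at hy1; omega
          · have h1 : v (v⁻¹ y) = v⁻¹ y := hfixval (v⁻¹ y) (by omega)
            rw [Equiv.Perm.apply_inv_self] at h1
            rw [h1] at hy2
            omega
        · rw [Fin.lt_def, Equiv.Perm.apply_inv_self]; exact hy1
        · exact Equiv.Perm.apply_inv_self v y
    have hκle : κ ≤ n + (j+1) - 1 := by omega
    set C : Equiv.Perm (Fin (2*n)) := cyc n κ (j+1) with hCdef
    have hCval : ∀ x : Fin (2*n), ((C x):ℕ) = if (x:ℕ) = n+j then (v PF:ℕ)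
        else if (v PF:ℕ) ≤ (x:ℕ) ∧ (x:ℕ) < n+j then (x:ℕ)+1 else (x:ℕ) := by
      intro x
      rw [hCdef, cyc_apply_val κ (j+1) (by omega) (by omega) (by omega) x]
      split_ifs <;> omega
    have hCPF : C PF = v PF := Fin.ext (by rw [hCval, hPFval, if_pos rfl])
    have hmono1 : ∀ y z : Fin (2*n), (y:ℕ) ≠ n+j → (z:ℕ) ≠ n+j → (y:ℕ) < (z:ℕ) →
        ((C y):ℕ) < ((C z):ℕ) := by
      intro y z hy hz hyz
      rw [hCval, hCval]
      split_ifs <;> omega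
    have hmiff : ∀ y z : Fin (2*n), (y:ℕ) ≠ n+j → (z:ℕ) ≠ n+j → (y < z ↔ C y < C z) := by
      intro y z hy hz
      constructor
      · intro h
        exact Fin.lt_def.2 (hmono1 y z hy hz (Fin.lt_def.1 h))
      · intro h
        rcases lt_trichotomy y z with h' | h' | h'
        · exact h'
        · rw [h'] at h; exact absurd h (lt_irrefl _)
        · have := hmono1 z y hz hy (Fin.lt_def.1 h')
          rw [Fin.lt_def] at h; omega
    set v' : Equiv.Perm (Fin (2*n)) := C⁻¹ * v with hv'def
    have hCv' : ∀ x, C (v' x) = v x := by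
      intro x
      rw [hv'def]
      simp only [Equiv.Perm.mul_apply, Equiv.Perm.apply_inv_self]
    have hne' : ∀ x : Fin (2*n), (x:ℕ) ≠ n+j → ((v' x):ℕ) ≠ n+j := by
      intro x hx hc
      have h1 : v' x = PF := Fin.ext (by rw [hPFval]; exact hc)
      have h2 : v x = v PF := by rw [← hCv' x, h1, hCPF]
      have h3 : x = PF := v.injective h2
      exact hx (by rw [h3, hPFval])
    have hA' : ∀ p q : Fin (2*n), (p:ℕ) < (q:ℕ) → (q:ℕ) < n → v' p < v' q := by
      intro p q h1 h2
      have hpne : (p:ℕ) ≠ n+j := by omega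
      have hqne : (q:ℕ) ≠ n+j := by omega
      refine (hmiff _ _ (hne' p hpne) (hne' q hqne)).2 ?_
      rw [hCv', hCv']
      exact hA p q h1 h2
    have hC' : ∀ i : Fin (2*n), n + j ≤ (i:ℕ) → v' i = i := by
      intro i hi
      rcases eq_or_lt_of_le hi with heq | hlt
      · have hiPF : i = PF := Fin.ext (by rw [hPFval]; omega)
        rw [hiPF, hv'def]
        simp only [Equiv.Perm.mul_apply]
        rw [← hCPF, Equiv.Perm.inv_apply_self]
      · have h1 : v i = i := hC i (by omega)
        have h2 : C i = i := Fin.ext (by rw [hCval]; split_ifs <;> omega)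
        rw [hv'def]
        simp only [Equiv.Perm.mul_apply, h1]
        nth_rewrite 1 [← h2]
        exact Equiv.Perm.inv_apply_self C i
    have hKf' : ∀ m, 1 ≤ m → m ≤ j → Kf n v m = Kf n v' m := by
      intro m h1 h2
      have hm2 : n + m - 1 < 2*n := by omega
      rw [Kf, Kf, dif_pos hm2, dif_pos hm2]
      congr 1
      apply Finset.filter_congr
      intro i _
      set Qm : Fin (2*n) := ⟨n+m-1, hm2⟩ with hQm
      have hQmval : (Qm:ℕ) = n+m-1 := rfl
      refine and_congr_right fun hi => ?_
      have hiQne : (Qm:ℕ) ≠ n+j := by rw [hQmval]; omega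
      have hine : (i:ℕ) ≠ n+j := by omega
      calc v Qm < v i ↔ C (v' Qm) < C (v' i) := by rw [hCv', hCv']
        _ ↔ v' Qm < v' i := (hmiff _ _ (hne' Qm hiQne) (hne' i hine)).symm
    -- assemble
    have hk1 : k (j+1) = κ := by rw [hk (j+1) (by omega) le_rfl, hKf]
    have hv' : v' = ((List.range j).map fun t => cyc n (k (j - t)) (j - t)).prod :=
      ih hjn v' hA' hC' k (fun m hm1 hm2 => (hk m hm1 (by omega)).trans (hKf' m hm1 hm2))
    have hlist : ((List.range (j+1)).map fun t => cyc n (k (j+1-t)) (j+1-t)).prod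
        = cyc n (k (j+1)) (j+1) * ((List.range j).map fun t => cyc n (k (j-t)) (j-t)).prod := by
      rw [List.range_succ_eq_map, List.map_cons, List.prod_cons, List.map_map]
      have hmaps : List.map ((fun t => cyc n (k (j+1-t)) (j+1-t)) ∘ Nat.succ) (List.range j)
          = List.map (fun t => cyc n (k (j-t)) (j-t)) (List.range j) := by
        apply List.map_congr_left
        intro t _
        simp only [Function.comp_apply, Nat.succ_sub_succ]
      rw [hmaps]
      simp only [Nat.sub_zero]
    rw [hlist, ← hv', hk1, ← hCdef]
    rw [hv'def, ← mul_assoc, mul_inv_cancel, one_mul]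

lemma len_eq_sum {n : ℕ} (hn : 1 ≤ n) (w : Equiv.Perm (Fin (2*n)))
    (hA : ∀ p q : Fin (2*n), (p:ℕ) < (q:ℕ) → (q:ℕ) < n → w p < w q) :
    len n w = ∑ j ∈ Finset.Icc 1 n, Kf n w j := by
  classical
  have hset : {p : Fin (2*n) × Fin (2*n) | p.1 < p.2 ∧ w p.2 < w p.1}
      = ↑(Finset.univ.filter fun p : Fin (2*n) × Fin (2*n) => p.1 < p.2 ∧ w p.2 < w p.1) := by
    ext p; simp
  rw [len, hset, Set.ncard_coe_finset]
  rw [Finset.card_eq_sum_card_fiberwise (f := Prod.snd) (t := Finset.univ)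
    (fun x _ => Finset.mem_univ _)]
  have hfib : ∀ q : Fin (2*n),
      ((Finset.univ.filter fun p : Fin (2*n) × Fin (2*n) => p.1 < p.2 ∧ w p.2 < w p.1).filter
        fun p => p.2 = q).card
      = (Finset.univ.filter fun i : Fin (2*n) => i < q ∧ w q < w i).card := by
    intro q
    apply Finset.card_nbij (fun p => p.1)
    · intro p hp
      simp only [Finset.mem_coe, Finset.mem_filter, Finset.mem_univ, true_and] at hp ⊢
      obtain ⟨⟨h1, h2⟩, h3⟩ := hp
      rw [h3] at h1 h2
      exact ⟨h1, h2⟩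
    · intro p hp q' hq' h
      simp only [Finset.coe_filter, Set.mem_setOf_eq, Finset.mem_filter] at hp hq'
      exact Prod.ext h (hp.2.trans hq'.2.symm)
    · intro i hi
      simp only [Finset.coe_filter, Set.mem_setOf_eq, Finset.mem_univ, true_and] at hi ⊢
      exact ⟨(i, q), by simp [hi.1, hi.2], rfl⟩
  rw [Finset.sum_congr rfl (fun q _ => hfib q)]
  have hzero : ∀ q : Fin (2*n), (q:ℕ) < n →
      (Finset.univ.filter fun i : Fin (2*n) => i < q ∧ w q < w i).card = 0 := by
    intro q hq
    rw [Finset.card_eq_zero, Finset.filter_eq_empty_iff]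
    rintro i _ ⟨h1, h2⟩
    exact absurd h2 (not_lt.2 (le_of_lt (hA i q (Fin.lt_def.1 h1) hq)))
  rw [← Finset.sum_subset (Finset.filter_subset (fun q : Fin (2*n) => n ≤ (q:ℕ)) Finset.univ)
    (fun q _ hq => hzero q (by simpa using hq))]
  apply Finset.sum_nbij' (i := fun q : Fin (2*n) => (q:ℕ) - n + 1)
    (j := fun m : ℕ => (⟨min (n+m-1) (2*n-1), by omega⟩ : Fin (2*n)))
  · intro q hq
    simp only [Finset.mem_filter, Finset.mem_univ, true_and] at hq
    simp only [Finset.mem_Icc]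
    have := q.isLt; omega
  · intro m hm
    simp only [Finset.mem_Icc] at hm
    simp only [Finset.mem_filter, Finset.mem_univ, true_and]
    show n ≤ min (n+m-1) (2*n-1)
    omega
  · intro q hq
    simp only [Finset.mem_filter, Finset.mem_univ, true_and] at hq
    have := q.isLt
    exact Fin.ext (by show min (n + ((q:ℕ) - n + 1) - 1) (2*n-1) = (q:ℕ); omega)
  · intro m hm
    simp only [Finset.mem_Icc] at hm
    show min (n+m-1) (2*n-1) - n + 1 = m
    omega
  · intro q hq
    simp only [Finset.mem_filter, Finset.mem_univ, true_and] at hq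
    have hql := q.isLt
    rw [Kf_eq w ((q:ℕ) - n + 1) (by omega) q (by omega)]
    congr 1
    apply Finset.filter_congr
    intro i _
    constructor
    · rintro ⟨h1, h2⟩
      exact ⟨by rw [Fin.lt_def] at h1; omega, h2⟩
    · rintro ⟨h1, h2⟩
      exact ⟨Fin.lt_def.2 (by omega), h2⟩



lemma adm_of_B {n : ℕ} (hn : 1 ≤ n) (w : Equiv.Perm (Fin (2*n)))
    (hB : ∀ p q : Fin (2*n), (p:ℕ) < (q:ℕ) → (q:ℕ) < n → w⁻¹ p < w⁻¹ q) :
    Admissible n (Kf n w) := by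
  intro j hj1 hjn
  have hQlt : n + j - 1 < 2*n := by omega
  set Q : Fin (2*n) := ⟨n+j-1, hQlt⟩ with hQdef
  have hQval : (Q:ℕ) = n+j-1 := rfl
  have hKfj : Kf n w j = (Finset.univ.filter
      fun p : Fin (2*n) => (p:ℕ) < n+j-1 ∧ w Q < w p).card := Kf_eq w j hQlt Q rfl
  by_cases hT : ∃ x : Fin (2*n), (x:ℕ) < n ∧ Q < w⁻¹ x
  · -- witness case
    set T' := Finset.univ.filter (fun x : Fin (2*n) => (x:ℕ) < n ∧ Q < w⁻¹ x) with hT'def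
    have hTne : T'.Nonempty := by
      obtain ⟨x, h1, h2⟩ := hT
      exact ⟨x, Finset.mem_filter.2 ⟨Finset.mem_univ _, h1, h2⟩⟩
    set u := T'.min' hTne with hudef
    have hu : (u:ℕ) < n ∧ Q < w⁻¹ u := by
      have h := Finset.mem_filter.1 (T'.min'_mem hTne)
      exact h.2
    have humin : ∀ x : Fin (2*n), (x:ℕ) < n → Q < w⁻¹ x → u ≤ x := fun x h1 h2 =>
      T'.min'_le x (Finset.mem_filter.2 ⟨Finset.mem_univ _, h1, h2⟩)
    set P : Fin (2*n) := w⁻¹ u with hPdef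
    have hPge : n + j ≤ (P:ℕ) := by
      have := hu.2
      rw [Fin.lt_def, hQval] at this
      omega
    have hPlt : (P:ℕ) < 2*n := P.isLt
    set i : ℕ := (P:ℕ) - n + 1 with hidef
    have hij : j < i := by omega
    have hin : i ≤ n := by omega
    have hwP : w P = u := Equiv.Perm.apply_inv_self w u
    have hKfi : Kf n w i = (Finset.univ.filter
        fun p : Fin (2*n) => (p:ℕ) < n+i-1 ∧ w P < w p).card :=
      Kf_eq w i (by omega) P (by omega)
    have hPval : (P:ℕ) = n+i-1 := by omega
    set G1 := Finset.univ.filter (fun p : Fin (2*n) => (p:ℕ) < n+j-1 ∧ w Q < w p) with hG1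
    set G2 := Finset.univ.filter
      (fun p : Fin (2*n) => n+j-1 < (p:ℕ) ∧ (p:ℕ) < (P:ℕ)) with hG2
    have hG2card : G2.card = (P:ℕ) - (n+j-1) - 1 := by
      rw [hG2, card_filter_val_eq (fun y => n+j-1 < y ∧ y < (P:ℕ)) (Finset.Ioo (n+j-1) (P:ℕ))
        (fun y => by simp only [Finset.mem_Ioo]; omega), Nat.card_Ioo]
    have hsub : G1 ∪ G2 ⊆ Finset.univ.filter
        (fun p : Fin (2*n) => (p:ℕ) < n+i-1 ∧ w P < w p) := by
      intro p hp
      rw [Finset.mem_union] at hp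
      rw [Finset.mem_filter]
      refine ⟨Finset.mem_univ _, ?_⟩
      rcases hp with hp | hp
      · rw [hG1, Finset.mem_filter] at hp
        obtain ⟨_, h1, h2⟩ := hp
        refine ⟨by omega, ?_⟩
        rw [hwP, Fin.lt_def]
        have hwplarge : n ≤ ((w p):ℕ) := by
          by_contra hsm
          push_neg at hsm
          rcases lt_or_ge ((w Q):ℕ) n with hv | hv
          · have h3 : w⁻¹ (w Q) < w⁻¹ (w p) := hB (w Q) (w p) (Fin.lt_def.1 h2) hsm
            rw [Equiv.Perm.inv_apply_self, Equiv.Perm.inv_apply_self] at h3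
            rw [Fin.lt_def, hQval] at h3
            omega
          · rw [Fin.lt_def] at h2; omega
        omega
      · rw [hG2, Finset.mem_filter] at hp
        obtain ⟨_, h1, h2⟩ := hp
        refine ⟨by omega, ?_⟩
        rw [hwP, Fin.lt_def]
        have hne : w p ≠ u := by
          intro he
          have : p = P := by rw [hPdef, ← he, Equiv.Perm.inv_apply_self]
          rw [this] at h2
          omega
        rcases lt_or_ge ((w p):ℕ) n with hsm | hlg
        · have h3 : Q < w⁻¹ (w p) := by
            rw [Equiv.Perm.inv_apply_self, Fin.lt_def, hQval]; omega
          have h4 : u ≤ w p := humin (w p) hsm h3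
          rw [Fin.le_def] at h4
          have : (u:ℕ) ≠ ((w p):ℕ) := fun he => hne (Fin.ext he.symm)
          omega
        · omega
    have hdisj : Disjoint G1 G2 := by
      rw [Finset.disjoint_left]
      intro p hp1 hp2
      rw [hG1, Finset.mem_filter] at hp1
      rw [hG2, Finset.mem_filter] at hp2
      omega
    have hcard : Kf n w j + ((P:ℕ) - (n+j-1) - 1) ≤ Kf n w i := by
      rw [hKfi, hKfj, ← hG2card]
      rw [← Finset.card_union_of_disjoint hdisj]
      exact Finset.card_le_card hsub
    have hterm : Kf n w j ≤ Kf n w i + j + 1 - i := by omega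
    have hmem : i ∈ Finset.Ioc j n := Finset.mem_Ioc.2 ⟨hij, hin⟩
    calc Kf n w j ≤ Kf n w i + j + 1 - i := hterm
      _ ≤ (Finset.Ioc j n).sup fun i => Kf n w i + j + 1 - i :=
          Finset.le_sup (f := fun i => Kf n w i + j + 1 - i) hmem
      _ ≤ admBound n (Kf n w) j := le_max_left _ _
  · -- no small value after Q : Kf n w j ≤ j
    push_neg at hT
    have hsm : ∀ x : Fin (2*n), (x:ℕ) < n → (w⁻¹ x : ℕ) ≤ n+j-1 := by
      intro x hx
      have h := hT x hx
      rw [Fin.le_def, hQval] at h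
      exact h
    set U := Finset.univ.filter (fun p : Fin (2*n) => (p:ℕ) < n+j) with hU
    set Sm := Finset.univ.filter
      (fun p : Fin (2*n) => (p:ℕ) < n+j ∧ ((w p):ℕ) < n) with hSm
    have hUcard : U.card = n+j := by
      rw [hU, card_filter_val_eq (fun y => y < n+j) (Finset.range (n+j))
        (fun y => by simp only [Finset.mem_range]; omega), Finset.card_range]
    have hSmcard : Sm.card = n := by
      have hsmalls : (Finset.univ.filter (fun x : Fin (2*n) => (x:ℕ) < n)).card = n := by
        rw [card_filter_val_eq (fun y => y < n) (Finset.range n)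
          (fun y => by simp only [Finset.mem_range]; omega), Finset.card_range]
      conv_rhs => rw [← hsmalls]
      apply (Finset.card_nbij (fun x : Fin (2*n) => w⁻¹ x) ?_ ?_ ?_).symm
      · intro x hx
        simp only [hSm]
        rw [Finset.mem_coe, Finset.mem_filter] at hx
        rw [Finset.mem_coe, Finset.mem_filter]
        refine ⟨Finset.mem_univ _, by have := hsm x hx.2; omega, ?_⟩
        rw [Equiv.Perm.apply_inv_self]
        exact hx.2
      · intro x _ y _ h
        exact w⁻¹.injective h
      · intro p hp
        simp only [hSm, Finset.coe_filter, Set.mem_setOf_eq, Finset.mem_univ, true_and] at hp ⊢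
        exact ⟨w p, hp.2, Equiv.Perm.inv_apply_self w p⟩
    have hGsub : Finset.univ.filter (fun p : Fin (2*n) => (p:ℕ) < n+j-1 ∧ w Q < w p)
        ⊆ U \ Sm := by
      intro p hp
      rw [Finset.mem_filter] at hp
      obtain ⟨_, h1, h2⟩ := hp
      rw [Finset.mem_sdiff, hU, hSm, Finset.mem_filter, Finset.mem_filter]
      refine ⟨⟨Finset.mem_univ _, by omega⟩, ?_⟩
      rintro ⟨_, _, hwp⟩
      rcases lt_or_ge ((w Q):ℕ) n with hv | hv
      · have h3 : w⁻¹ (w Q) < w⁻¹ (w p) := hB (w Q) (w p) (Fin.lt_def.1 h2) hwp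
        rw [Equiv.Perm.inv_apply_self, Equiv.Perm.inv_apply_self, Fin.lt_def, hQval] at h3
        omega
      · rw [Fin.lt_def] at h2; omega
    have hjbound : Kf n w j ≤ j := by
      rw [hKfj]
      calc (Finset.univ.filter fun p : Fin (2*n) => (p:ℕ) < n+j-1 ∧ w Q < w p).card
          ≤ (U \ Sm).card := Finset.card_le_card hGsub
        _ = U.card - Sm.card := Finset.card_sdiff_of_subset (by
            intro p hp
            rw [hSm, Finset.mem_filter] at hp
            rw [hU, Finset.mem_filter]
            exact ⟨Finset.mem_univ _, hp.2.1⟩)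
        _ ≤ j := by omega
    exact le_trans hjbound (le_max_right _ _)

/-- The minimal-length element `w` of a double coset `O_σ` admits a decomposition
`w = c_{k_n,n} ⋯ c_{k_1,1}` for an admissible sequence `[k_n, …, k_1]`, with
`ℓ(w) = k_n + ⋯ + k_1` (so this decomposition is minimal). -/
theorem minimal_length_cycle_decomposition (n : ℕ) (hn : 1 ≤ n)
    (σ w : Equiv.Perm (Fin (2 * n))) (hw : w ∈ dcoset n σ)
    (hmin : ∀ t ∈ dcoset n σ, len n w ≤ len n t) :
    ∃ k : ℕ → ℕ, Admissible n k ∧ w = cycProd n k ∧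
      len n w = ∑ j ∈ Finset.Icc 1 n, k j := by
  have hA := min_A hw hmin
  have hB := min_B hw hmin
  refine ⟨Kf n w, adm_of_B hn w hB, ?_, ?_⟩
  · exact peel hn n le_rfl w hA (fun i hi => absurd i.isLt (by omega)) (Kf n w)
      (fun m _ _ => rfl)
  · exact len_eq_sum hn w hA
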